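/- For all a, x ∈ ℝ, arctan(x) ≤ arctan(a) + (x − a)/(1 + a²) + (3√3/16)(x − a)². -/

import Mathlib

open Set

private lemma key_deriv1 (c x : ℝ) :
    HasDerivAt (fun y : ℝ => Real.arctan y - c * y ^ 2)
      ((1 + x ^ 2)⁻¹ - c * (2 * x)) x := by
  have h1 := Real.hasDerivAt_arctan' x
  have h2 : HasDerivAt (fun y : ℝ => c * y ^ 2) (c * (2 * x)) x := by
    simpa using ((hasDerivAt_pow 2 x).const_mul c)
  exact h1.sub h2

private lemma key_deriv2 (c x : ℝ) :
    HasDerivAt (fun y : ℝ => (1 + y ^ 2)⁻¹ - c * (2 * y))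
      (-(2 * x) / (1 + x ^ 2) ^ 2 - c * 2) x := by
  have hne : (1 : ℝ) + x ^ 2 ≠ 0 := by positivity
  have h1 : HasDerivAt (fun y : ℝ => 1 + y ^ 2) (2 * x) x := by
    simpa using ((hasDerivAt_pow 2 x).const_add 1)
  have h2 := h1.inv hne
  have h3 : HasDerivAt (fun y : ℝ => c * (2 * y)) (c * 2) x := by
    simpa [mul_comm, mul_left_comm, mul_assoc] using ((hasDerivAt_id x).const_mul (c * 2))
  exact h2.sub h3

private lemma sqrt3_ineq (x : ℝ) :
    -(2 * x) / (1 + x ^ 2) ^ 2 ≤ 3 * Real.sqrt 3 / 8 := by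
  have hs : Real.sqrt 3 ^ 2 = 3 := Real.sq_sqrt (by norm_num)
  have hs1 : (1 : ℝ) ≤ Real.sqrt 3 := by
    nlinarith [Real.sqrt_nonneg 3]
  have hpos : (0 : ℝ) < (1 + x ^ 2) ^ 2 := by positivity
  rw [div_le_div_iff₀ hpos (by norm_num : (0:ℝ) < 8)]
  have hquad : (0:ℝ) ≤ Real.sqrt 3 * x ^ 2 - 2 * x + 3 * Real.sqrt 3 := by
    nlinarith [sq_nonneg (x - 1), mul_nonneg (by linarith : (0:ℝ) ≤ Real.sqrt 3 - 1) (sq_nonneg x)]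
  have hprod : (0:ℝ) ≤ (Real.sqrt 3 * x + 1) ^ 2 *
      (Real.sqrt 3 * x ^ 2 - 2 * x + 3 * Real.sqrt 3) :=
    mul_nonneg (sq_nonneg _) hquad
  have hexp : (Real.sqrt 3 * x + 1) ^ 2 * (Real.sqrt 3 * x ^ 2 - 2 * x + 3 * Real.sqrt 3)
      = 3 * Real.sqrt 3 * (1 + x ^ 2) ^ 2 + 16 * x := by
    linear_combination (Real.sqrt 3 * x ^ 4 + 3 * Real.sqrt 3 * x ^ 2 + 6 * x) * hs
  rw [hexp] at hprod
  linarith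

/-- Global quadratic overestimator (parabola above) for `arctan`. -/
theorem arctan_quadratic_overestimator :
    ∀ a x : ℝ,
      Real.arctan x ≤ Real.arctan a + (x - a) / (1 + a ^ 2)
        + (3 * Real.sqrt 3 / 16) * (x - a) ^ 2 := by
  intro a x
  set c : ℝ := 3 * Real.sqrt 3 / 16 with hc
  set f : ℝ → ℝ := fun y => Real.arctan y - c * y ^ 2 with hf
  have hd1 : ∀ y, HasDerivAt f ((1 + y ^ 2)⁻¹ - c * (2 * y)) y := key_deriv1 c
  have hdf : deriv f = fun y => (1 + y ^ 2)⁻¹ - c * (2 * y) :=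
    funext fun y => (hd1 y).deriv
  have hconc : ConcaveOn ℝ univ f := by
    apply concaveOn_univ_of_deriv2_nonpos
    · exact fun y => (hd1 y).differentiableAt
    · rw [hdf]; exact fun y => (key_deriv2 c y).differentiableAt
    · intro y
      have : deriv^[2] f y = -(2 * y) / (1 + y ^ 2) ^ 2 - c * 2 := by
        simp only [Function.iterate_succ, Function.iterate_zero, Function.comp_apply, id]
        rw [hdf]
        exact (key_deriv2 c y).deriv
      rw [this]
      have := sqrt3_ineq y
      rw [hc]
      linarith
  have key : f x ≤ f a + ((1 + a ^ 2)⁻¹ - c * (2 * a)) * (x - a) := by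
    rcases lt_trichotomy a x with h | h | h
    · have := hconc.slope_le_of_hasDerivAt (mem_univ a) (mem_univ x) h (hd1 a)
      rw [slope_def_field, div_le_iff₀ (by linarith : (0:ℝ) < x - a)] at this
      linarith
    · simp [h]
    · have := hconc.le_slope_of_hasDerivAt (mem_univ x) (mem_univ a) h (hd1 a)
      rw [slope_def_field, le_div_iff₀ (by linarith : (0:ℝ) < a - x)] at this
      nlinarith
  have hsimp : f x = Real.arctan x - c * x ^ 2 := rfl
  have hsa : f a = Real.arctan a - c * a ^ 2 := rfl
  rw [hsimp, hsa] at key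
  have hinv : (1 + a ^ 2)⁻¹ * (x - a) = (x - a) / (1 + a ^ 2) := by
    rw [div_eq_mul_inv, mul_comm]
  nlinarith [key]
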